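/- For Hom_b(E,F) between two (a,b)-modules, the map Λ defined by Λ(φ)(e) = φ(a·e) − a·φ(e) sends ℂ[[b]]-linear maps to ℂ[[b]]-linear maps (where b acts on Hom_b(E,F) with sign change, S(b)·φ := S(−b)∘φ appropriately), and satisfies Λ·b̌ − b̌·Λ = b̌², where b̌ denotes the modified b-action. Hence Hom_{a,b}(E,F) is an (a,b)-module. -/
import Mathlib


set_option synthInstance.maxHeartbeats 1000000
set_option maxHeartbeats 1000000

open PowerSeries

noncomputable section

/-- `ℂ[[b]]`. -/
abbrev Rb := PowerSeries ℂ

variable {E : Type} [AddCommGroup E] [Module Rb E]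
  [Module ℂ E] [IsScalarTower ℂ Rb E]

/-- Multiplication by `bⁿ`, i.e. the submodule `bⁿ·G` of a `ℂ[[b]]`-module. -/
def bpow (n : ℕ) (G : Submodule Rb E) : Submodule Rb E :=
  (Ideal.span {(X : Rb) ^ n}) • G

/-- The operator `b` (multiplication by `X`) as a `ℂ`-linear endomorphism. -/
def bop : E →ₗ[ℂ] E := (LinearMap.lsmul Rb E (X : Rb)).restrictScalars ℂ

/-- An (a,b)-module structure: `E` is a free finite-rank `ℂ[[b]]`-module
and `a` is a `ℂ`-linear, `b`-adically continuous endomorphism with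
`a·b − b·a = b²`; equivalently, `a(S·x) = S·a(x) + b²·S'(b)·x` for all
`S ∈ ℂ[[b]]`. -/
def IsABMod (a : E →ₗ[ℂ] E) : Prop :=
  ∀ (S : Rb) (x : E), a (S • x) = S • a x + ((X : Rb) ^ 2 * derivative ℂ S) • x

/-- The operators `Tⱼ = bʲ·(b⁻¹a)ʲ`, defined recursively by `T₀ = id`,
`T_{j+1} = (a − j·b)∘Tⱼ`. -/
def Tj (a : E →ₗ[ℂ] E) : ℕ → (E →ₗ[ℂ] E)
  | 0 => LinearMap.id
  | (j + 1) => (a - (j : ℂ) • bop) ∘ₗ Tj a j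

/-- The `ℂ`-subspace `Σ_{j=0}^{k} aʲ·b^{k−j+1}·E`. -/
def Psi (a : E →ₗ[ℂ] E) (k : ℕ) : Submodule ℂ E :=
  ⨆ j ∈ Finset.range (k + 1),
    Submodule.map (a ^ j) ((bpow (k - j + 1) ⊤).restrictScalars ℂ)

/-- The regularity condition `a^{k+1}·E ⊆ Σ_{j=0}^{k} aʲ·b^{k−j+1}·E`. -/
def RegCond (a : E →ₗ[ℂ] E) (k : ℕ) : Prop :=
  ∀ x : E, (a ^ (k + 1)) x ∈ Psi a k

/-- `E` is regular (equivalently: some regularity condition holds). -/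
def IsRegularAB (a : E →ₗ[ℂ] E) : Prop := ∃ k, RegCond a k

/-- The regularity order `or(E)`. -/
def regOrder (a : E →ₗ[ℂ] E) : ℕ := sInf {k | RegCond a k}

/-- `b^k·E^♯ = b^k·Φ_k(E) = Σ_{j=0}^{k} b^{k−j}·Tⱼ(E)`: the saturation
`E^♯ = Σ_j (b⁻¹a)ʲ·E` of `E`, renormalized by `b^k` so as to live inside `E`. -/
def Wsat (a : E →ₗ[ℂ] E) (k : ℕ) : Submodule Rb E :=
  Submodule.span Rb
    (⋃ j ∈ Finset.range (k + 1), Set.range fun x : E => ((X : Rb) ^ (k - j)) • (Tj a j x))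

/-- A submodule `G ⊆ E` is a simple-pole submodule when `a·G ⊆ b·G`. -/
def SimplePoleSub (a : E →ₗ[ℂ] E) (G : Submodule Rb E) : Prop :=
  ∀ x ∈ G, a x ∈ bpow 1 G

/-- The index `δ(E)`: the smallest `m` with `E^♯ ⊆ b^{−m}·E`,
i.e. `bᵐ·E^♯ ⊆ E`, i.e. `bᵐ·(b^k·E^♯) ⊆ b^k·E` for `k = or(E)`. -/
def deltaIdx (a : E →ₗ[ℂ] E) : ℕ :=
  sInf {m | bpow m (Wsat a (regOrder a)) ≤ bpow (regOrder a) ⊤}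

/-- The biggest simple-pole submodule `E^b` of `E`. -/
def Eb (a : E →ₗ[ℂ] E) : Submodule Rb E := sSup {G | SimplePoleSub a G}

variable {F : Type} [AddCommGroup F] [Module Rb F] [Module ℂ F] [IsScalarTower ℂ Rb F]

/-- The operator `Λ` on maps `E → F`: `Λ(φ)(e) = φ(a·e) − a·φ(e)`. -/
def LamF (aE : E →ₗ[ℂ] E) (aF : F →ₗ[ℂ] F) (φ : E → F) : E → F :=
  fun x => φ (aE x) - aF (φ x)

/-- The sign-changed action `b̌` of `b` on maps `E → F`: `(b̌·φ)(e) = −b·φ(e)`. -/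
def bchk (φ : E → F) : E → F := fun x => -((X : Rb) • φ x)

/-- For (a,b)-modules `E`, `F`, the operator `Λ(φ)(e) = φ(a·e) − a·φ(e)` sends
`ℂ[[b]]`-linear maps to `ℂ[[b]]`-linear maps (for the sign-changed `b`-action
`b̌` on `Hom_b(E,F)`), and satisfies `Λ·b̌ − b̌·Λ = b̌²`.  Hence
`Hom_{a,b}(E,F)` is an (a,b)-module. -/
theorem stmt_12 [Module.Free Rb E] [Module.Finite Rb E]
    [Module.Free Rb F] [Module.Finite Rb F]
    (aE : E →ₗ[ℂ] E) (aF : F →ₗ[ℂ] F) (haE : IsABMod aE) (haF : IsABMod aF) :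
    (∀ φ : E →ₗ[Rb] F, ∃ ψ : E →ₗ[Rb] F, ⇑ψ = LamF aE aF ⇑φ) ∧
    (∀ φ : E →ₗ[Rb] F,
      LamF aE aF (bchk ⇑φ) - bchk (LamF aE aF ⇑φ) =
        fun x : E => ((X : Rb) ^ 2) • φ x) := by
  constructor
  · intro φ
    refine ⟨{ toFun := LamF aE aF ⇑φ, map_add' := ?_, map_smul' := ?_ }, rfl⟩
    · intro x y
      simp [LamF, map_add, sub_add_sub_comm]
    · intro S x
      simp only [LamF, RingHom.id_apply, haE S x, map_add, map_smul, haF S (φ x)]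
      rw [smul_sub]
      abel
  · intro φ
    funext x
    have h := haF (X : Rb) (φ x)
    simp only [LamF, bchk, map_neg, map_smul, Pi.sub_apply, derivative_X, mul_one] at h ⊢
    rw [h, smul_sub]
    abel

end
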